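/- Let E be a b×k matrix with entries that are c-subsets of a v-element message set, entries in each row pairwise disjoint, key uniform on rows, message uniform in E(K,S). If the code has perfect secrecy (P[M=m|S=s] = P[M=m] for all m,s) and every message m satisfies |{K : m appears in row K}| = bck/v, then for every message m and every column s, |{K : m ∈ E(K,s)}| = bc/v. -/
import Mathlib


open Finset

theorem stmt_3 (b k v c : ℕ) (hb : 0 < b) (hk : 0 < k) (hv : 0 < v)
    (E : Fin b → Fin k → Finset (Fin v))
    (hcard : ∀ K s, (E K s).card = c)
    (hdisj : ∀ K, ∀ s s' : Fin k, s ≠ s' → Disjoint (E K s) (E K s'))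
    (p : Fin k → ℚ) (hp0 : ∀ s, 0 ≤ p s) (hp1 : ∑ s, p s = 1)
    (hsecrecy : ∀ (m : Fin v) (s : Fin k),
      ((univ.filter fun K : Fin b => m ∈ E K s).card : ℚ) / b =
        ∑ s' : Fin k,
          p s' * (((univ.filter fun K : Fin b => m ∈ E K s').card : ℚ) / b))
    (hkappa : ∀ m : Fin v,
      (univ.filter fun K : Fin b => ∃ s, m ∈ E K s).card * v = b * c * k) :
    ∀ (m : Fin v) (s : Fin k),
      (univ.filter fun K : Fin b => m ∈ E K s).card * v = b * c := by
  intro m s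
  -- N m s is constant in s
  have hconst : ∀ s' : Fin k,
      (univ.filter fun K : Fin b => m ∈ E K s').card =
      (univ.filter fun K : Fin b => m ∈ E K s).card := by
    intro s'
    have h1 := hsecrecy m s
    have h2 := hsecrecy m s'
    have hbQ : (b : ℚ) ≠ 0 := by exact_mod_cast hb.ne'
    have : ((univ.filter fun K : Fin b => m ∈ E K s').card : ℚ) / b =
        ((univ.filter fun K : Fin b => m ∈ E K s).card : ℚ) / b := by
      rw [h1, h2]
    field_simp at this
    exact_mod_cast this
  -- each row contains m in at most one column
  have hrow : ∀ K : Fin b, (univ.filter fun s' : Fin k => m ∈ E K s').card =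
      if ∃ s', m ∈ E K s' then 1 else 0 := by
    intro K
    have hle : (univ.filter fun s' : Fin k => m ∈ E K s').card ≤ 1 := by
      apply Finset.card_le_one.mpr
      intro a ha b' hb'
      simp only [mem_filter] at ha hb'
      by_contra hne
      exact absurd ((hdisj K a b' hne).le_bot (mem_inter.mpr ⟨ha.2, hb'.2⟩)) (by simp)
    by_cases h : ∃ s', m ∈ E K s'
    · rw [if_pos h]
      obtain ⟨s', hs'⟩ := h
      have hpos : 0 < (univ.filter fun s' : Fin k => m ∈ E K s').card :=
        Finset.card_pos.mpr ⟨s', by simp [hs']⟩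
      omega
    · rw [if_neg h]
      rw [Finset.card_eq_zero, Finset.filter_eq_empty_iff]
      intro x _
      exact fun hx => h ⟨x, hx⟩
  -- sum over columns equals the ∃-count
  have hsum : ∑ s' : Fin k, (univ.filter fun K : Fin b => m ∈ E K s').card =
      (univ.filter fun K : Fin b => ∃ s', m ∈ E K s').card := by
    simp only [Finset.card_filter]
    rw [Finset.sum_comm]
    apply Finset.sum_congr rfl
    intro K _
    have := hrow K
    simp only [Finset.card_filter] at this
    rw [this]
  have hsum2 : ∑ s' : Fin k, (univ.filter fun K : Fin b => m ∈ E K s').card =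
      k * (univ.filter fun K : Fin b => m ∈ E K s).card := by
    rw [Finset.sum_congr rfl fun s' _ => hconst s']
    simp [mul_comm]
  have hk2 := hkappa m
  rw [← hsum, hsum2] at hk2
  have hkn : k ≠ 0 := hk.ne'
  nlinarith [hk2, Nat.mul_comm k b]
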